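/- Let q be a power of an odd prime and let G = 1 + 𝔤 be a pattern subgroup of UT_n(F_{q^k}), regarded over F_q, with † an involutive F_q-algebra antiautomorphism of 𝔤 satisfying (α e_ij)† ∈ F_{q^k}^× e_{j̄ ī} for all α ∈ F_{q^k}^×. Let 𝔥 = {x ∈ 𝔤 | x_ij = 0 if j ≤ n/2}. For λ ∈ 𝔤*, set 𝔩_λ = {x ∈ 𝔤 | λ(yx) = 0 for all y ∈ 𝔥}, 𝔯_λ = {x ∈ 𝔤 | λ(xy) = 0 for all y ∈ 𝔥†}, and 𝔤_λ = 𝔩_λ ∩ 𝔯_λ. Then λ(xy) = 0 for all x, y ∈ 𝔤_λ. -/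

import Mathlib

open Matrix

section PatternGroups

variable (F : Type) [Field F] (E : Type) [Field E] [Algebra F E] {n : ℕ}

/-- The pattern subalgebra `𝔤 ⊆ 𝔲𝔱_n(E)` of matrices supported on the set `S` of strict
relations `i ≺ j` of a subposet of the usual linear order on `[n]`. -/
def patAlg (S : Set (Fin n × Fin n)) : Set (Matrix (Fin n) (Fin n) E) :=
  {x | ∀ i j : Fin n, (i, j) ∉ S → x i j = 0}

/-- The pattern subgroup `G = 1 + 𝔤`. -/
def patGrp (S : Set (Fin n × Fin n)) : Set (Matrix (Fin n) (Fin n) E) :=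
  {g | ∃ x ∈ patAlg E S, g = 1 + x}

/-- The two-sided ideal `𝔥 = {x ∈ 𝔤 | x_{ij} = 0 if j ≤ n/2}` (indices read 1-based). -/
def patHAlg (S : Set (Fin n × Fin n)) : Set (Matrix (Fin n) (Fin n) E) :=
  {x | x ∈ patAlg E S ∧ ∀ i j : Fin n, (j : ℕ) + 1 ≤ n / 2 → x i j = 0}

/-- The normal subgroup `H = 1 + 𝔥` of `G`. -/
def patHGrp (S : Set (Fin n × Fin n)) : Set (Matrix (Fin n) (Fin n) E) :=
  {g | ∃ x ∈ patHAlg E S, g = 1 + x}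

/-- The extension of `†` from `𝔤` to `G = 1 + 𝔤`: `(1+x)† = 1 + x†`. -/
def dagGrp (dag : Matrix (Fin n) (Fin n) E → Matrix (Fin n) (Fin n) E)
    (g : Matrix (Fin n) (Fin n) E) : Matrix (Fin n) (Fin n) E :=
  1 + dag (g - 1)

/-- The subgroup `U = {u ∈ G | u† = u⁻¹}` of the pattern group `G`. -/
def patUGrp (S : Set (Fin n × Fin n))
    (dag : Matrix (Fin n) (Fin n) E → Matrix (Fin n) (Fin n) E) :
    Set (Matrix (Fin n) (Fin n) E) :=
  {u | u ∈ patGrp E S ∧ u * dagGrp E dag u = 1 ∧ dagGrp E dag u * u = 1}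

/-- The set `𝔲 = {x ∈ 𝔤 | x† = -x}`. -/
def patUAlg (S : Set (Fin n × Fin n))
    (dag : Matrix (Fin n) (Fin n) E → Matrix (Fin n) (Fin n) E) :
    Set (Matrix (Fin n) (Fin n) E) :=
  {x | x ∈ patAlg E S ∧ dag x = -x}

/-- `†` is an involutive `F`-algebra antiautomorphism of the pattern algebra `𝔤` sending
each `α e_{ij}` (`α ∈ E^×`) into `E^× e_{\bar j \bar i}`, where `\bar i = n + 1 - i`. -/
structure IsPatternAntiInvolution (S : Set (Fin n × Fin n))
    (dag : Matrix (Fin n) (Fin n) E → Matrix (Fin n) (Fin n) E) : Prop where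
  map_mem : ∀ x ∈ patAlg E S, dag x ∈ patAlg E S
  map_add : ∀ x ∈ patAlg E S, ∀ y ∈ patAlg E S, dag (x + y) = dag x + dag y
  map_smul : ∀ (c : F), ∀ x ∈ patAlg E S,
    dag (algebraMap F E c • x) = algebraMap F E c • dag x
  map_mul : ∀ x ∈ patAlg E S, ∀ y ∈ patAlg E S, dag (x * y) = dag y * dag x
  invol : ∀ x ∈ patAlg E S, dag (dag x) = x
  elementary : ∀ i j : Fin n, (i, j) ∈ S → ∀ α : E, α ≠ 0 →
    ∃ β : E, β ≠ 0 ∧ dag (Matrix.single i j α) = Matrix.single j.rev i.rev β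

/-- A Springer morphism: a bijection `f : G → 𝔤` with `f(U) = 𝔲` and
`f(1+x) = x + Σ_{i ≥ 2} a_i x^i` with coefficients `a_i ∈ F`. -/
def IsSpringerMorphism (S : Set (Fin n × Fin n))
    (dag f : Matrix (Fin n) (Fin n) E → Matrix (Fin n) (Fin n) E) : Prop :=
  Set.BijOn f (patGrp E S) (patAlg E S) ∧
  f '' patUGrp E S dag = patUAlg E S dag ∧
  ∃ (N : ℕ) (a : ℕ → F), a 1 = 1 ∧
    ∀ x ∈ patAlg E S, f (1 + x) = ∑ i ∈ Finset.Ico 1 N, algebraMap F E (a i) • x ^ i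

/-- The orbit `G · w = {g w g† | g ∈ G}` of `w` under the action `g · x = g x g†`. -/
def patGrpDot (S : Set (Fin n × Fin n))
    (dag : Matrix (Fin n) (Fin n) E → Matrix (Fin n) (Fin n) E)
    (w : Matrix (Fin n) (Fin n) E) : Set (Matrix (Fin n) (Fin n) E) :=
  {z | ∃ g ∈ patGrp E S, z = g * w * dagGrp E dag g}

end PatternGroups

section Supercharacters

variable (F : Type) [Field F] (E : Type) [Field E] [Algebra F E] {n : ℕ}

/-- The orbit of `λ ∈ 𝔲*` under a subset `T ⊆ G` (for `T = G` or `T = H`), acting by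
`(g·λ)(x) = λ(g⁻¹ · x) = λ(g⁻¹ x (g⁻¹)†)`.  An element `λ ∈ 𝔲*` is recorded as a function
`𝔲 → F` (here represented via a functional `lam` on the full matrix space: only its values
on `𝔲` matter). -/
def patDualOrbit (S : Set (Fin n × Fin n))
    (dag : Matrix (Fin n) (Fin n) E → Matrix (Fin n) (Fin n) E)
    (T : Set (Matrix (Fin n) (Fin n) E))
    (lam : Module.Dual F (Matrix (Fin n) (Fin n) E)) :
    Set (↥(patUAlg E S dag) → F) :=
  {ψ | ∃ g ∈ T, ∀ x : ↥(patUAlg E S dag),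
    ψ x = lam (g⁻¹ * (x : Matrix (Fin n) (Fin n) E) * dagGrp E dag g⁻¹)}

/-- The supercharacter `χ_λ = (|H·λ|/|G·λ|) Σ_{μ ∈ G·λ} θ ∘ μ ∘ f` of `U`, for `λ ∈ 𝔲*`. -/
noncomputable def patSupchar (S : Set (Fin n × Fin n))
    (dag f : Matrix (Fin n) (Fin n) E → Matrix (Fin n) (Fin n) E)
    (θ : AddChar F ℂ) (lam : Module.Dual F (Matrix (Fin n) (Fin n) E))
    (u : Matrix (Fin n) (Fin n) E) : ℂ :=
  (Nat.card (patDualOrbit F E S dag (patHGrp E S) lam) : ℂ) /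
    (Nat.card (patDualOrbit F E S dag (patGrp E S) lam) : ℂ) *
    ∑ᶠ ψ ∈ patDualOrbit F E S dag (patGrp E S) lam,
      @dite ℂ (f u ∈ patUAlg E S dag) (Classical.propDecidable _)
        (fun h => θ (ψ ⟨f u, h⟩)) (fun _ => 0)

/-- The superclass `K_u = {v ∈ U | f(v) ∈ G · f(u)}` of `u`, as a subset of the ambient
matrix space. -/
def patSupclass (S : Set (Fin n × Fin n))
    (dag f : Matrix (Fin n) (Fin n) E → Matrix (Fin n) (Fin n) E)
    (u : Matrix (Fin n) (Fin n) E) : Set (Matrix (Fin n) (Fin n) E) :=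
  {v | v ∈ patUGrp E S dag ∧ f v ∈ patGrpDot E S dag (f u)}

end Supercharacters


section AuxDag

variable {F : Type} [Field F] {E : Type} [Field E] [Algebra F E] {n : ℕ}
  {S : Set (Fin n × Fin n)}
  {dag : Matrix (Fin n) (Fin n) E → Matrix (Fin n) (Fin n) E}

lemma auxPatAlg_zero : (0 : Matrix (Fin n) (Fin n) E) ∈ patAlg E S :=
  fun _ _ _ => rfl

lemma auxPatAlg_add {x y : Matrix (Fin n) (Fin n) E} (hx : x ∈ patAlg E S)
    (hy : y ∈ patAlg E S) : x + y ∈ patAlg E S := by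
  intro i j hij
  simp [Matrix.add_apply, hx i j hij, hy i j hij]

lemma auxPatAlg_sum {ι : Type*} (t : Finset ι) (g : ι → Matrix (Fin n) (Fin n) E)
    (hg : ∀ p ∈ t, g p ∈ patAlg E S) : (∑ p ∈ t, g p) ∈ patAlg E S := by
  intro i j hij
  rw [Matrix.sum_apply]
  exact Finset.sum_eq_zero fun p hp => hg p hp i j hij

lemma auxDag_zero (h : IsPatternAntiInvolution F E S dag) :
    dag (0 : Matrix (Fin n) (Fin n) E) = 0 := by
  have := h.map_smul 0 0 auxPatAlg_zero
  simpa using this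

lemma auxDag_sum (h : IsPatternAntiInvolution F E S dag) {ι : Type*} (t : Finset ι)
    (g : ι → Matrix (Fin n) (Fin n) E) (hg : ∀ p ∈ t, g p ∈ patAlg E S) :
    dag (∑ p ∈ t, g p) = ∑ p ∈ t, dag (g p) := by
  classical
  induction t using Finset.induction_on with
  | empty => simpa using auxDag_zero h
  | @insert a s ha ih =>
      rw [Finset.sum_insert ha, Finset.sum_insert ha,
        h.map_add _ (hg a (Finset.mem_insert_self a s)) _
          (auxPatAlg_sum s g fun p hp => hg p (Finset.mem_insert_of_mem hp)),
        ih (fun p hp => hg p (Finset.mem_insert_of_mem hp))]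

/-- Entrywise vanishing for `dag`: if `w` vanishes at the reflected position, `dag w`
vanishes at `(k, l)`. -/
lemma auxDag_entry (h : IsPatternAntiInvolution F E S dag)
    {w : Matrix (Fin n) (Fin n) E} (hw : w ∈ patAlg E S) (k l : Fin n)
    (hz : w l.rev k.rev = 0) : dag w k l = 0 := by
  classical
  have hmem : ∀ i j : Fin n, Matrix.single i j (w i j) ∈ patAlg E S := by
    intro i j i' j' hij'
    by_cases hij : i = i' ∧ j = j'
    · rcases hij with ⟨rfl, rfl⟩
      simp [Matrix.single, hw i j hij']
    · simp [Matrix.single, hij]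
  have hrep : w = ∑ p ∈ (Finset.univ : Finset (Fin n × Fin n)),
      Matrix.single p.1 p.2 (w p.1 p.2) := by
    rw [← Finset.univ_product_univ, Finset.sum_product]
    exact Matrix.matrix_eq_sum_single w
  have hdw : dag w = ∑ p ∈ (Finset.univ : Finset (Fin n × Fin n)),
      dag (Matrix.single p.1 p.2 (w p.1 p.2)) := by
    conv_lhs => rw [hrep]
    exact auxDag_sum h _ _ (fun p _ => hmem p.1 p.2)
  rw [hdw, Matrix.sum_apply]
  apply Finset.sum_eq_zero
  rintro ⟨i, j⟩ -
  by_cases h0 : w i j = 0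
  · simp only [h0]
    have : Matrix.single i j (0 : E) = 0 := by
      ext; simp [Matrix.single]
    rw [this, auxDag_zero h]
    rfl
  · have hS : (i, j) ∈ S := by
      by_contra hns
      exact h0 (hw i j hns)
    obtain ⟨β, -, hβ⟩ := h.elementary i j hS (w i j) h0
    rw [hβ]
    have : ¬(j.rev = k ∧ i.rev = l) := by
      rintro ⟨rfl, rfl⟩
      rw [Fin.rev_rev, Fin.rev_rev] at hz
      exact h0 hz
    simp [Matrix.single, this]

end AuxDag

/-- With `G = 1 + 𝔤` a pattern subgroup, `†` an anti-involution as above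
and `𝔥 = {x ∈ 𝔤 | x_ij = 0 if j ≤ n/2}`: for `λ ∈ 𝔤*`, setting
`𝔩_λ = {x ∈ 𝔤 | λ(yx) = 0 ∀ y ∈ 𝔥}`, `𝔯_λ = {x ∈ 𝔤 | λ(xy) = 0 ∀ y ∈ 𝔥†}` and
`𝔤_λ = 𝔩_λ ∩ 𝔯_λ`, one has `λ(xy) = 0` for all `x, y ∈ 𝔤_λ`. -/
theorem lambda_vanishes_on_products_in_g_lambda
    (F : Type) [Field F] [Fintype F] (E : Type) [Field E] [Fintype E] [Algebra F E]
    (hodd : ringChar F ≠ 2)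
    {n : ℕ} (S : Set (Fin n × Fin n))
    (hS1 : ∀ p ∈ S, p.1 < p.2)
    (hS2 : ∀ i j k : Fin n, (i, j) ∈ S → (j, k) ∈ S → (i, k) ∈ S)
    (dag : Matrix (Fin n) (Fin n) E → Matrix (Fin n) (Fin n) E)
    (hdag : IsPatternAntiInvolution F E S dag)
    (lam : Module.Dual F (Matrix (Fin n) (Fin n) E)) :
    ∀ x ∈ patAlg E S, ∀ y ∈ patAlg E S,
      (∀ z ∈ patHAlg E S, lam (z * x) = 0) →
      (∀ z ∈ patHAlg E S, lam (x * dag z) = 0) →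
      (∀ z ∈ patHAlg E S, lam (z * y) = 0) →
      (∀ z ∈ patHAlg E S, lam (y * dag z) = 0) →
      lam (x * y) = 0  := by
  classical
  intro x hx y hy h1 h2 h3 h4
  -- a : x restricted to columns ≥ n/2 ; c : x restricted to columns in [n/2, n - n/2)
  -- b' : y restricted to rows < n - n/2
  set a : Matrix (Fin n) (Fin n) E :=
    Matrix.of fun i j => if n / 2 ≤ (j : ℕ) then x i j else 0 with ha_def
  set c : Matrix (Fin n) (Fin n) E :=
    Matrix.of fun i j => if n / 2 ≤ (j : ℕ) ∧ (j : ℕ) < n - n / 2 then x i j else 0 with hc_def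
  set b' : Matrix (Fin n) (Fin n) E :=
    Matrix.of fun i j => if (i : ℕ) < n - n / 2 then y i j else 0 with hb_def
  have key : x * y = a * y + x * b' - c * y := by
    ext i j
    simp only [Matrix.sub_apply, Matrix.add_apply, Matrix.mul_apply, ha_def, hb_def, hc_def,
      Matrix.of_apply]
    rw [← Finset.sum_add_distrib, ← Finset.sum_sub_distrib]
    apply Finset.sum_congr rfl
    intro k _
    have hle : n / 2 ≤ n - n / 2 := by omega
    by_cases h5 : n / 2 ≤ (k : ℕ)
    · by_cases h6 : (k : ℕ) < n - n / 2 <;> simp [h5, h6] <;> ring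
    · have h6 : (k : ℕ) < n - n / 2 := by omega
      simp [h5, h6]
  have haH : a ∈ patHAlg E S := by
    constructor
    · intro i j hij
      simp only [ha_def, Matrix.of_apply, hx i j hij, ite_self]
    · intro i j hj
      have : ¬ n / 2 ≤ (j : ℕ) := by omega
      simp [ha_def, this]
  have hcH : c ∈ patHAlg E S := by
    constructor
    · intro i j hij
      simp only [hc_def, Matrix.of_apply, hx i j hij, ite_self]
    · intro i j hj
      have : ¬ (n / 2 ≤ (j : ℕ) ∧ (j : ℕ) < n - n / 2) := by omega
      simp [hc_def, this]
  have hb'A : b' ∈ patAlg E S := by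
    intro i j hij
    simp only [hb_def, Matrix.of_apply, hy i j hij, ite_self]
  have hzH : dag b' ∈ patHAlg E S := by
    refine ⟨hdag.map_mem b' hb'A, ?_⟩
    intro i j hj
    apply auxDag_entry hdag hb'A
    have hjr : ¬ ((j.rev : ℕ) < n - n / 2) := by
      rw [Fin.val_rev]
      omega
    simp only [hb_def, Matrix.of_apply, if_neg hjr]
  have hxb' : lam (x * b') = 0 := by
    have := h2 (dag b') hzH
    rwa [hdag.invol b' hb'A] at this
  rw [key, map_sub, map_add, h3 a haH, hxb', h3 c hcH]
  ring
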